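/- The number of Stembridge codes of length n equals n factorial, i.e., |Code_n| = n!. -/

import Mathlib

open scoped Classical

/-- The maximum value appearing in the sequence `α`. -/
def codeMax {n : ℕ} (α : Fin n → ℕ) : ℕ := Finset.univ.sup α

/-- `(α, f)` is a Stembridge code of length `n`: every value `k` with
`1 ≤ k ≤ max α` occurs at least twice in `α`, and the mark `f k` satisfies
`1 ≤ f k ≤ (number of occurrences of k) - 1`; `f` vanishes outside `[max α]`. -/
def IsStembridgeCode (n : ℕ) (α : Fin n → ℕ) (f : ℕ → ℕ) : Prop :=
  (∀ k, 1 ≤ k → k ≤ codeMax α →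
      1 ≤ f k ∧ f k + 1 ≤ (Finset.univ.filter (fun i => α i = k)).card) ∧
  (∀ k, k = 0 ∨ codeMax α < k → f k = 0)

namespace StemAux

open Finset

variable {n : ℕ}

/-- number of occurrences of `k` in `α` -/
def cnt {n : ℕ} (α : Fin n → ℕ) (k : ℕ) : ℕ :=
  (Finset.univ.filter (fun i => α i = k)).card

lemma cnt_pos_iff {α : Fin n → ℕ} {k : ℕ} : 1 ≤ cnt α k ↔ ∃ i, α i = k := by
  simp [cnt, Nat.succ_le_iff, Finset.card_pos, Finset.filter_nonempty_iff]

lemma le_codeMax (α : Fin n → ℕ) (i : Fin n) : α i ≤ codeMax α :=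
  Finset.le_sup (Finset.mem_univ i)

/-- `codeMax`-free characterization of Stembridge codes. -/
lemma isCode_iff (α : Fin n → ℕ) (f : ℕ → ℕ) :
    IsStembridgeCode n α f ↔
      f 0 = 0 ∧
      (∀ k, 1 ≤ k → (1 ≤ f k ∧ f k + 1 ≤ cnt α k) ∨ (f k = 0 ∧ cnt α k = 0)) ∧
      (∀ k, 1 ≤ k → 1 ≤ cnt α (k + 1) → 1 ≤ cnt α k) := by
  constructor
  · rintro ⟨h1, h2⟩
    refine ⟨h2 0 (Or.inl rfl), fun k hk => ?_, fun k hk hk1 => ?_⟩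
    · by_cases hM : k ≤ codeMax α
      · exact Or.inl (h1 k hk hM)
      · refine Or.inr ⟨h2 k (Or.inr (by omega)), ?_⟩
        by_contra hc
        obtain ⟨i, hi⟩ := cnt_pos_iff.mp (show 1 ≤ cnt α k by omega)
        exact hM (hi ▸ le_codeMax α i)
    · obtain ⟨i, hi⟩ := cnt_pos_iff.mp hk1
      have hM : k ≤ codeMax α := by
        have h := hi ▸ le_codeMax α i
        omega
      have h := (h1 k hk hM).2
      have h1' : (1 : ℕ) ≤ f k + 1 := by omega
      exact h1'.trans h
  · rintro ⟨h0, h1, h2⟩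
    have key : ∀ t k, 1 ≤ k → k + t = codeMax α → 1 ≤ cnt α k := by
      intro t
      induction t with
      | zero =>
        intro k hk hkM
        have hne : (Finset.univ : Finset (Fin n)).Nonempty := by
          rcases Nat.eq_zero_or_pos n with h | h
          · exfalso
            subst h
            have : codeMax α = 0 := by
              simp [codeMax, Finset.univ_eq_empty]
            omega
          · exact ⟨⟨0, h⟩, Finset.mem_univ _⟩
        obtain ⟨i, _, hi⟩ := Finset.exists_mem_eq_sup Finset.univ hne α
        have hMi : codeMax α = α i := hi
        exact cnt_pos_iff.mpr ⟨i, by omega⟩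
      | succ t ih =>
        intro k hk hkM
        exact h2 k hk (ih (k + 1) (by omega) (by omega))
    constructor
    · intro k hk hkM
      have hc : 1 ≤ cnt α k := key (codeMax α - k) k hk (by omega)
      rcases h1 k hk with h | h
      · exact h
      · exact absurd h.2 (by omega)
    · intro k hk
      rcases hk with rfl | hk
      · exact h0
      · rcases h1 k (by omega) with h | h
        · exfalso
          obtain ⟨i, hi⟩ := cnt_pos_iff.mp (by omega : 1 ≤ cnt α k)
          have := hi ▸ le_codeMax α i
          omega
        · exact h.1

/-- All-zero sequences give a code: the base case. -/
lemma zero_code : IsStembridgeCode n (fun _ => 0) (fun _ => 0) := by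
  constructor
  · intro k hk hM
    exfalso
    have : codeMax (fun _ : Fin n => 0) = 0 :=
      Nat.le_zero.mp (Finset.sup_le fun i _ => le_rfl)
    omega
  · intro k _; rfl

/-- canonical equivalence between `Fin (n - B.card)` and the complement of `B`. -/
noncomputable def cEquiv (B : Finset (Fin n)) : Fin (n - B.card) ≃ {x : Fin n // x ∈ Bᶜ} :=
  (finCongr (by simp [Finset.card_compl])).trans Bᶜ.equivFin.symm

def upVal (v : ℕ) : ℕ := if v = 0 then 0 else v + 1

lemma upVal_ne_one (v : ℕ) : upVal v ≠ 1 := by unfold upVal; split <;> omega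

lemma upVal_inj {v w : ℕ} (h : upVal v = upVal w) : v = w := by
  unfold upVal at h; split at h <;> split at h <;> omega

noncomputable def upA (B : Finset (Fin n)) (β : Fin (n - B.card) → ℕ) : Fin n → ℕ :=
  fun i => if h : i ∈ B then 1 else upVal (β ((cEquiv B).symm ⟨i, Finset.mem_compl.mpr h⟩))

noncomputable def downA (B : Finset (Fin n)) (α : Fin n → ℕ) : Fin (n - B.card) → ℕ :=
  fun i => α ((cEquiv B i : Fin n)) - 1

def upF (r : ℕ) (g : ℕ → ℕ) : ℕ → ℕ :=
  fun k => if k = 0 then 0 else if k = 1 then r + 1 else g (k - 1)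

def downF (f : ℕ → ℕ) : ℕ → ℕ := fun k => if k = 0 then 0 else f (k + 1)

lemma upA_eq_one_iff (B : Finset (Fin n)) (β : Fin (n - B.card) → ℕ) (i : Fin n) :
    upA B β i = 1 ↔ i ∈ B := by
  by_cases h : i ∈ B
  · simp [upA, h]
  · simp [upA, h, upVal_ne_one]

lemma cnt_upA_one (B : Finset (Fin n)) (β : Fin (n - B.card) → ℕ) :
    cnt (upA B β) 1 = B.card := by
  unfold cnt
  congr 1
  ext i
  simp [upA_eq_one_iff]

lemma notMem_of_upA_succ {B : Finset (Fin n)} {β : Fin (n - B.card) → ℕ} {k : ℕ}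
    (hk : 1 ≤ k) {a : Fin n} (ha : upA B β a = k + 1) : a ∉ B := by
  intro hmem
  rw [(by simp [upA, hmem] : upA B β a = 1)] at ha
  omega

lemma upA_coe_cEquiv (B : Finset (Fin n)) (β : Fin (n - B.card) → ℕ) (b : Fin (n - B.card)) :
    upA B β ((cEquiv B b : {x : Fin n // x ∈ Bᶜ}) : Fin n) = upVal (β b) := by
  have hmem : ((cEquiv B b : {x : Fin n // x ∈ Bᶜ}) : Fin n) ∉ B :=
    Finset.mem_compl.mp (cEquiv B b).2
  simp only [upA, dif_neg hmem]
  congr 1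
  exact congrArg β ((cEquiv B).symm_apply_apply b)

lemma cnt_upA_succ (B : Finset (Fin n)) (β : Fin (n - B.card) → ℕ) (k : ℕ) (hk : 1 ≤ k) :
    cnt (upA B β) (k + 1) = cnt β k := by
  unfold cnt
  refine Finset.card_bij'
    (fun a ha => (cEquiv B).symm
      ⟨a, Finset.mem_compl.mpr (notMem_of_upA_succ hk (Finset.mem_filter.mp ha).2)⟩)
    (fun b hb => ((cEquiv B b : {x : Fin n // x ∈ Bᶜ}) : Fin n)) ?_ ?_ ?_ ?_
  · intro a ha
    have hmem : a ∉ B := notMem_of_upA_succ hk (Finset.mem_filter.mp ha).2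
    have hval := (Finset.mem_filter.mp ha).2
    rw [Finset.mem_filter]
    refine ⟨Finset.mem_univ _, ?_⟩
    simp only [upA, dif_neg hmem] at hval
    exact upVal_inj (v := β ((cEquiv B).symm ⟨a, Finset.mem_compl.mpr hmem⟩)) (w := k)
      (by rw [hval]; unfold upVal; split <;> omega)
  · intro b hb
    rw [Finset.mem_filter]
    refine ⟨Finset.mem_univ _, ?_⟩
    rw [upA_coe_cEquiv, (Finset.mem_filter.mp hb).2]
    unfold upVal
    split <;> omega
  · intro a ha
    exact congrArg Subtype.val ((cEquiv B).apply_symm_apply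
      ⟨a, Finset.mem_compl.mpr (notMem_of_upA_succ hk (Finset.mem_filter.mp ha).2)⟩)
  · intro b hb
    exact (cEquiv B).symm_apply_apply b

lemma up_downA {α : Fin n → ℕ} {B : Finset (Fin n)} (hB : ∀ i, i ∈ B ↔ α i = 1) :
    upA B (downA B α) = α := by
  funext i
  by_cases h : i ∈ B
  · simp [upA, h, ((hB i).mp h).symm]
  · have hα : α i ≠ 1 := fun hc => h ((hB i).mpr hc)
    simp only [upA, dif_neg h, downA, Subtype.coe_eta, Equiv.apply_symm_apply]
    unfold upVal
    split <;> omega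

lemma upF_downF {f : ℕ → ℕ} (h0 : f 0 = 0) (h1 : 1 ≤ f 1) :
    upF (f 1 - 1) (downF f) = f := by
  funext k
  match k with
  | 0 => simp [upF, h0]
  | 1 => simp [upF]; omega
  | (k + 2) => simp [upF, downF]

lemma up_valid (B : Finset (Fin n)) (hB : 2 ≤ B.card) (r : ℕ) (hr : r < B.card - 1)
    (β : Fin (n - B.card) → ℕ) (g : ℕ → ℕ) (hc : IsStembridgeCode (n - B.card) β g) :
    IsStembridgeCode n (upA B β) (upF r g) := by
  rw [isCode_iff] at hc ⊢
  obtain ⟨hg0, hg1, hg2⟩ := hc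
  refine ⟨rfl, ?_, ?_⟩
  · intro k hk
    rcases Nat.lt_or_ge k 2 with h2 | h2
    · have hk1 : k = 1 := by omega
      subst hk1
      left
      rw [cnt_upA_one]
      simp [upF]
      omega
    · have hk1 : 1 ≤ k - 1 := by omega
      have hcnt : cnt (upA B β) k = cnt β (k - 1) := by
        have := cnt_upA_succ B β (k - 1) hk1
        rwa [Nat.sub_add_cancel (by omega)] at this
      have hf : upF r g k = g (k - 1) := by
        simp [upF, show k ≠ 0 by omega, show k ≠ 1 by omega]
      rw [hcnt, hf]
      exact hg1 (k - 1) hk1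
  · intro k hk hcnt
    rcases Nat.lt_or_ge k 2 with h2 | h2
    · have hk1 : k = 1 := by omega
      subst hk1
      rw [cnt_upA_one]
      omega
    · have hk1 : 1 ≤ k - 1 := by omega
      have e1 : cnt (upA B β) (k + 1) = cnt β k := cnt_upA_succ B β k (by omega)
      have e2 : cnt (upA B β) k = cnt β (k - 1) := by
        have := cnt_upA_succ B β (k - 1) hk1
        rwa [Nat.sub_add_cancel (by omega)] at this
      rw [e2]
      apply hg2 (k - 1) hk1
      rw [Nat.sub_add_cancel (by omega)]
      omega

abbrev StemT (n : ℕ) : Type := {p : (Fin n → ℕ) × (ℕ → ℕ) // IsStembridgeCode n p.1 p.2}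

noncomputable def upMap (n : ℕ) :
    Option (Σ B : {B : Finset (Fin n) // 2 ≤ B.card},
      Fin (B.1.card - 1) × StemT (n - B.1.card)) → StemT n
  | none => ⟨(fun _ => 0, fun _ => 0), zero_code⟩
  | some ⟨⟨B, hB⟩, r, ⟨⟨β, g⟩, hc⟩⟩ =>
      ⟨(upA B β, upF r g), up_valid B hB r r.isLt β g hc⟩

lemma cnt_zero_fun (k : ℕ) (hk : 1 ≤ k) : cnt (fun _ : Fin n => 0) k = 0 := by
  unfold cnt
  rw [Finset.card_eq_zero, Finset.filter_eq_empty_iff]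
  intro i _
  show ¬ (0 : ℕ) = k
  omega

lemma upMap_inj (n : ℕ) : Function.Injective (upMap n) := by
  rintro (_ | ⟨⟨B1, hB1⟩, r1, ⟨⟨β1, g1⟩, hc1⟩⟩) (_ | ⟨⟨B2, hB2⟩, r2, ⟨⟨β2, g2⟩, hc2⟩⟩) h
  · rfl
  · exfalso
    obtain ⟨i, hi⟩ := Finset.card_pos.mp (by omega : 0 < B2.card)
    have hα := congrFun (congrArg (fun p => p.1.1) h) i
    simp only [upMap] at hα
    rw [(upA_eq_one_iff B2 β2 i).mpr hi] at hα
    simp at hα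
  · exfalso
    obtain ⟨i, hi⟩ := Finset.card_pos.mp (by omega : 0 < B1.card)
    have hα := congrFun (congrArg (fun p => p.1.1) h) i
    simp only [upMap] at hα
    rw [(upA_eq_one_iff B1 β1 i).mpr hi] at hα
    simp at hα
  · have hA : upA B1 β1 = upA B2 β2 := congrArg (fun p => p.1.1) h
    have hF : upF r1 g1 = upF r2 g2 := congrArg (fun p => p.1.2) h
    have hBeq : B1 = B2 := by
      ext i
      rw [← upA_eq_one_iff B1 β1 i, hA, upA_eq_one_iff]
    subst hBeq
    have hr : r1 = r2 := by
      have h1 := congrFun hF 1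
      simp [upF] at h1
      exact Fin.ext (by omega)
    have hβ : β1 = β2 := by
      funext i
      have hi := congrFun hA ((cEquiv B1 i : {x : Fin n // x ∈ B1ᶜ}) : Fin n)
      rw [upA_coe_cEquiv, upA_coe_cEquiv] at hi
      exact upVal_inj hi
    have hg : g1 = g2 := by
      funext k
      match k with
      | 0 => exact (hc1.2 0 (Or.inl rfl)).trans (hc2.2 0 (Or.inl rfl)).symm
      | (k + 1) =>
        have h1 := congrFun hF (k + 2)
        simpa only [upF, show k + 2 ≠ 0 by omega, show k + 2 ≠ 1 by omega, ↓reduceIte,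
          show k + 2 - 1 = k + 1 by omega] using h1
    subst hr hβ hg
    rfl

lemma upMap_surj (n : ℕ) : Function.Surjective (upMap n) := by
  rintro ⟨⟨α, f⟩, hf⟩
  by_cases hz : ∀ i, α i = 0
  · refine ⟨none, ?_⟩
    apply Subtype.ext
    simp only [upMap]
    have hα : (fun _ : Fin n => 0) = α := funext fun i => (hz i).symm
    have hfc := (isCode_iff α f).mp hf
    have hfz : (fun _ : ℕ => 0) = f := by
      funext k
      match k with
      | 0 => exact hfc.1.symm
      | (k + 1) =>
        rcases hfc.2.1 (k + 1) (by omega) with h | h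
        · exfalso
          have hc0 : cnt α (k + 1) = 0 := by
            rw [← hα]; exact cnt_zero_fun (k + 1) (by omega)
          omega
        · exact h.1.symm
    rw [hα, hfz]
  · push_neg at hz
    obtain ⟨i0, hi0⟩ := hz
    have hfc := (isCode_iff α f).mp hf
    obtain ⟨h0, h1, h2⟩ := hfc
    have hdesc : ∀ j, 1 ≤ cnt α (1 + j) → 1 ≤ cnt α 1 := by
      intro j
      induction j with
      | zero => intro h; simpa using h
      | succ j ih =>
        intro hj
        exact ih (h2 (1 + j) (by omega) (by rwa [show 1 + j + 1 = 1 + (j + 1) by omega]))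
    have hc1 : 1 ≤ cnt α 1 := by
      apply hdesc (α i0 - 1)
      rw [show 1 + (α i0 - 1) = α i0 by omega]
      exact cnt_pos_iff.mpr ⟨i0, rfl⟩
    have hf1 : 1 ≤ f 1 ∧ f 1 + 1 ≤ cnt α 1 := by
      rcases h1 1 le_rfl with h | h
      · exact h
      · exact absurd h.2 (by omega)
    set B : Finset (Fin n) := Finset.univ.filter (fun i => α i = 1) with hBdef
    have hmemB : ∀ i, i ∈ B ↔ α i = 1 := by intro i; simp [hBdef]
    have hcntB : cnt α 1 = B.card := rfl
    have hB2 : 2 ≤ B.card := by omega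
    have hud : upA B (downA B α) = α := up_downA hmemB
    have hcntd : ∀ k, 1 ≤ k → cnt (downA B α) k = cnt α (k + 1) := by
      intro k hk
      rw [← cnt_upA_succ B (downA B α) k hk, hud]
    have hdcode : IsStembridgeCode (n - B.card) (downA B α) (downF f) := by
      rw [isCode_iff]
      refine ⟨rfl, fun k hk => ?_, fun k hk hh => ?_⟩
      · have hd : downF f k = f (k + 1) := by simp [downF, show k ≠ 0 by omega]
        rw [hcntd k hk, hd]
        exact h1 (k + 1) (by omega)
      · rw [hcntd k hk]
        rw [hcntd (k + 1) (by omega)] at hh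
        exact h2 (k + 1) (by omega) hh
    refine ⟨some ⟨⟨B, hB2⟩, ⟨f 1 - 1, by show f 1 - 1 < B.card - 1; omega⟩, ⟨(downA B α, downF f), hdcode⟩⟩, ?_⟩
    apply Subtype.ext
    simp only [upMap]
    have he : upF (f 1 - 1) (downF f) = f := upF_downF h0 hf1.1
    rw [hud]
    exact congrArg (Prod.mk α) he

lemma upMap_bij (n : ℕ) : Function.Bijective (upMap n) :=
  ⟨upMap_inj n, upMap_surj n⟩

lemma sum_blocks (n : ℕ) (F : ℕ → ℕ) :
    ∑ B : {B : Finset (Fin n) // 2 ≤ B.card}, F (B.1.card)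
      = ∑ b ∈ Finset.Icc 2 n, n.choose b * F b := by
  have hmaps : ∀ B ∈ Finset.univ.filter (fun B : Finset (Fin n) => 2 ≤ B.card),
      B.card ∈ Finset.Icc 2 n := by
    intro B hB
    simp only [Finset.mem_filter] at hB
    rw [Finset.mem_Icc]
    exact ⟨hB.2, le_trans (Finset.card_le_univ _) (by simp)⟩
  rw [← Finset.sum_subtype (Finset.univ.filter fun B : Finset (Fin n) => 2 ≤ B.card)
    (by simp) (fun B => F B.card)]
  rw [← Finset.sum_fiberwise_of_maps_to hmaps (fun B => F B.card)]
  apply Finset.sum_congr rfl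
  intro b hb
  have hb2 : 2 ≤ b := (Finset.mem_Icc.mp hb).1
  have hset : (Finset.univ.filter fun B : Finset (Fin n) => 2 ≤ B.card).filter
      (fun B => B.card = b) = Finset.powersetCard b Finset.univ := by
    ext B
    simp only [Finset.mem_filter, Finset.mem_univ, true_and,
      Finset.mem_powersetCard_univ]
    constructor
    · rintro ⟨_, h⟩; exact h
    · intro h; exact ⟨h ▸ hb2, h⟩
  rw [hset]
  rw [Finset.sum_congr rfl (fun B hB => by rw [Finset.mem_powersetCard_univ.mp hB])]
  rw [Finset.sum_const, Finset.card_powersetCard, Finset.card_univ, Fintype.card_fin,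
    smul_eq_mul]

lemma step_id (n b : ℕ) (hb1 : 1 ≤ b) (hbn : b ≤ n) :
    n.choose (b - 1) * (n - (b - 1)).factorial = b * (n.choose b * (n - b).factorial) := by
  apply Nat.eq_of_mul_eq_mul_right (Nat.factorial_pos (b - 1))
  have e1 : n.choose (b - 1) * (n - (b - 1)).factorial * (b - 1).factorial
      = n.factorial := by
    rw [mul_right_comm]
    exact Nat.choose_mul_factorial_mul_factorial (by omega)
  have e2 : b * (n.choose b * (n - b).factorial) * (b - 1).factorial
      = n.factorial := by
    have h : b * (n.choose b * (n - b).factorial) * (b - 1).factorial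
        = n.choose b * (n - b).factorial * (b * (b - 1).factorial) := by ring
    rw [h, Nat.mul_factorial_pred (by omega), mul_right_comm]
    exact Nat.choose_mul_factorial_mul_factorial hbn
  rw [e1, e2]

lemma tele (n : ℕ) : ∀ j, 1 ≤ j → j ≤ n →
    (∑ b ∈ Finset.Icc 2 j, (b - 1) * (n.choose b * (n - b).factorial))
      + n.choose j * (n - j).factorial = n.choose 1 * (n - 1).factorial := by
  intro j
  induction j with
  | zero => intro h; exact absurd h (by omega)
  | succ j ih =>
    intro h1 hn
    rcases Nat.eq_zero_or_pos j with rfl | hj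
    · rw [Finset.Icc_eq_empty (by omega)]
      simp
    · rw [Finset.sum_Icc_succ_top (by omega : 2 ≤ j + 1)]
      have hkey : n.choose j * (n - j).factorial
          = (j + 1) * (n.choose (j + 1) * (n - (j + 1)).factorial) := by
        have h := step_id n (j + 1) (by omega) hn
        simpa using h
      have hih := ih (by omega) (by omega)
      set S := ∑ b ∈ Finset.Icc 2 j, (b - 1) * (n.choose b * (n - b).factorial) with hS
      set T := n.choose (j + 1) * (n - (j + 1)).factorial with hT
      calc S + (j + 1 - 1) * T + T = S + (j + 1) * T := by
            rw [show j + 1 - 1 = j from rfl]; ring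
        _ = S + n.choose j * (n - j).factorial := by rw [hkey]
        _ = _ := hih

lemma main (n : ℕ) : Finite (StemT n) ∧ Nat.card (StemT n) = n.factorial := by
  induction n using Nat.strong_induction_on with
  | _ n IH =>
  haveI hfin : ∀ B : {B : Finset (Fin n) // 2 ≤ B.card}, Finite (StemT (n - B.1.card)) := by
    intro B
    have h2 := B.2
    have hle : B.1.card ≤ n := le_trans (Finset.card_le_univ _) (by simp)
    exact (IH (n - B.1.card) (by omega)).1
  haveI hfin2 : ∀ B : {B : Finset (Fin n) // 2 ≤ B.card},
      Finite (Fin (B.1.card - 1) × StemT (n - B.1.card)) := fun B => inferInstance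
  haveI hfin4 : Finite (Option (Σ B : {B : Finset (Fin n) // 2 ≤ B.card},
      Fin (B.1.card - 1) × StemT (n - B.1.card))) :=
    Finite.of_equiv (_ ⊕ PUnit.{1}) (Equiv.optionEquivSumPUnit _).symm
  have hbij := upMap_bij n
  have hFin : Finite (StemT n) := Finite.of_surjective _ hbij.2
  refine ⟨hFin, ?_⟩
  have hcard : Nat.card (StemT n)
      = Nat.card (Option (Σ B : {B : Finset (Fin n) // 2 ≤ B.card},
        Fin (B.1.card - 1) × StemT (n - B.1.card))) :=
    (Nat.card_eq_of_bijective _ hbij).symm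
  rw [hcard]
  letI : ∀ B : {B : Finset (Fin n) // 2 ≤ B.card}, Fintype (StemT (n - B.1.card)) :=
    fun B => Fintype.ofFinite _
  rw [Nat.card_congr (Equiv.optionEquivSumPUnit _ : _ ≃ _ ⊕ PUnit.{1}), Nat.card_sum]
  simp only [Nat.card_unique]
  rw [Nat.card_eq_fintype_card, Fintype.card_sigma]
  have hterm : ∀ B : {B : Finset (Fin n) // 2 ≤ B.card},
      Fintype.card (Fin (B.1.card - 1) × StemT (n - B.1.card))
        = (B.1.card - 1) * (n - B.1.card).factorial := by
    intro B
    rw [Fintype.card_prod, Fintype.card_fin]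
    congr 1
    rw [← Nat.card_eq_fintype_card]
    have hle : B.1.card ≤ n := le_trans (Finset.card_le_univ _) (by simp)
    have h2 := B.2
    exact (IH (n - B.1.card) (by omega)).2
  rw [Finset.sum_congr rfl (fun B _ => hterm B)]
  rw [sum_blocks n (fun b => (b - 1) * (n - b).factorial)]
  rcases Nat.eq_zero_or_pos n with rfl | hn
  · rw [Finset.Icc_eq_empty (by omega)]
    simp
  · have htele := tele n n (by omega) le_rfl
    rw [Finset.sum_congr rfl (fun b _ => by
      ring : ∀ b ∈ Finset.Icc 2 n, n.choose b * ((b - 1) * (n - b).factorial)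
        = (b - 1) * (n.choose b * (n - b).factorial))]
    rw [Nat.choose_self, Nat.sub_self, Nat.factorial_zero, one_mul,
      Nat.choose_one_right] at htele
    rw [htele, Nat.mul_factorial_pred (Nat.pos_iff_ne_zero.mp hn)]

end StemAux

/-- The number of Stembridge codes of length `n` is `n!`. -/
theorem card_stembridgeCodes (n : ℕ) :
    Nat.card {p : (Fin n → ℕ) × (ℕ → ℕ) // IsStembridgeCode n p.1 p.2} = n.factorial :=
  (StemAux.main n).2
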